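/- Let X ⊆ ℝ^d be a nonempty open bounded set and η > 0, and let (X_j)_{j≥1} be i.i.d. random points uniformly distributed on X. Then there exist constants a, b > 0 such that for every i ≥ 1, the probability that some point of X has no sample within distance η among the first i samples satisfies P(∃ x ∈ X, ∀ j ≤ i, ‖X_j − x‖ > η) ≤ a e^{−b i}. -/

import Mathlib

open MeasureTheory ProbabilityTheory Metric

/-- The uniform probability measure on a set `X` of positive finite volume. -/
noncomputable def uniformOnSet (d : ℕ) (X : Set (EuclideanSpace ℝ (Fin d))) :
    Measure (EuclideanSpace ℝ (Fin d)) :=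
  (volume X)⁻¹ • volume.restrict X

/-- Exponential coverage: for i.i.d. uniform samples on a nonempty open bounded set `X`,
the probability that some point of `X` has no sample within distance `η` among the first
`i` samples decays exponentially in `i`. -/
theorem exponential_coverage (d : ℕ)
    (X : Set (EuclideanSpace ℝ (Fin d))) (hXne : X.Nonempty)
    (hXopen : IsOpen X) (hXbdd : Bornology.IsBounded X)
    (η : ℝ) (hη : 0 < η)
    (Ω : Type) (mΩ : MeasurableSpace Ω) (P : Measure Ω) (hP : IsProbabilityMeasure P)
    (Y : ℕ → Ω → EuclideanSpace ℝ (Fin d))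
    (hmeas : ∀ j, Measurable (Y j))
    (hindep : iIndepFun Y P)
    (hlaw : ∀ j, Measure.map (Y j) P = uniformOnSet d X) :
    ∃ a b : ℝ, 0 < a ∧ 0 < b ∧ ∀ i : ℕ, 1 ≤ i →
      P {ω | ∃ x ∈ X, ∀ j : ℕ, 1 ≤ j → j ≤ i → η < ‖Y j ω - x‖} ≤
        ENNReal.ofReal (a * Real.exp (-b * i)) := by
  classical
  set μ := uniformOnSet d X with hμdef
  have hvolpos : 0 < volume X := hXopen.measure_pos volume hXne
  have hvolfin : volume X < ⊤ := hXbdd.measure_lt_top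
  have hμuniv : μ Set.univ = 1 := by
    simp only [hμdef, uniformOnSet, Measure.smul_apply, Measure.restrict_apply_univ,
      smul_eq_mul]
    exact ENNReal.inv_mul_cancel hvolpos.ne' hvolfin.ne
  -- finite cover of X by balls of radius η/2 centered in X
  have htb : TotallyBounded X :=
    TotallyBounded.subset subset_closure hXbdd.isCompact_closure.totallyBounded
  obtain ⟨t, htX, htfin, hcover⟩ :=
    Metric.finite_approx_of_totallyBounded htb (η / 2) (by positivity)
  set s : Finset (EuclideanSpace ℝ (Fin d)) := htfin.toFinset with hsdef
  have hsX : ∀ c ∈ s, c ∈ X := fun c hc => htX (htfin.mem_toFinset.mp hc)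
  have hsne : s.Nonempty := by
    obtain ⟨x, hx⟩ := hXne
    obtain ⟨c, hc, -⟩ := Set.mem_iUnion₂.mp (hcover hx)
    exact ⟨c, htfin.mem_toFinset.mpr hc⟩
  -- positivity of the measure of each ball
  set p : EuclideanSpace ℝ (Fin d) → ENNReal := fun c => μ (ball c (η / 2)) with hpdef
  have hple : ∀ c, p c ≤ 1 := fun c => hμuniv ▸ measure_mono (Set.subset_univ _)
  have hppos : ∀ c ∈ s, 0 < p c := by
    intro c hc
    have hcX : c ∈ X := hsX c hc
    have : μ (ball c (η / 2)) = (volume X)⁻¹ * volume (ball c (η / 2) ∩ X) := by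
      simp [hμdef, uniformOnSet, Measure.restrict_apply measurableSet_ball]
    show 0 < μ (ball c (η / 2))
    rw [this]
    have hopen : IsOpen (ball c (η / 2) ∩ X) := isOpen_ball.inter hXopen
    have hne : (ball c (η / 2) ∩ X).Nonempty :=
      ⟨c, mem_ball_self (by positivity), hcX⟩
    exact ENNReal.mul_pos (ENNReal.inv_ne_zero.mpr hvolfin.ne)
      (hopen.measure_pos volume hne).ne'
  -- real bound
  set q : EuclideanSpace ℝ (Fin d) → ℝ := fun c => (1 - p c).toReal with hqdef
  have hsub_ne_top : ∀ c, 1 - p c ≠ ⊤ := fun c =>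
    ((tsub_le_self.trans_lt (by norm_num : (1 : ENNReal) < ⊤)).ne)
  have hq_lt_one : ∀ c ∈ s, q c < 1 := by
    intro c hc
    have : 1 - p c < 1 := ENNReal.sub_lt_self (by norm_num) one_ne_zero (hppos c hc).ne'
    have := ENNReal.toReal_lt_toReal (hsub_ne_top c) (by norm_num : (1 : ENNReal) ≠ ⊤)
      |>.mpr this
    simpa using this
  set r : ℝ := max (1 / 2) (s.sup' hsne q) with hrdef
  have hr0 : 0 < r := lt_of_lt_of_le (by norm_num) (le_max_left _ _)
  have hr1 : r < 1 := max_lt (by norm_num) ((Finset.sup'_lt_iff hsne).mpr hq_lt_one)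
  have hsub_le : ∀ c ∈ s, 1 - p c ≤ ENNReal.ofReal r := by
    intro c hc
    rw [← ENNReal.ofReal_toReal (hsub_ne_top c)]
    exact ENNReal.ofReal_le_ofReal ((Finset.le_sup' q hc).trans (le_max_right _ _))
  refine ⟨s.card, -Real.log r, by exact_mod_cast Finset.card_pos.mpr hsne,
    by simpa using Real.log_neg hr0 hr1, ?_⟩
  intro i hi
  -- inclusion of the bad event in a finite union
  have hsubset : {ω | ∃ x ∈ X, ∀ j : ℕ, 1 ≤ j → j ≤ i → η < ‖Y j ω - x‖} ⊆
      ⋃ c ∈ s, ⋂ j ∈ Finset.Icc 1 i, Y j ⁻¹' (ball c (η / 2))ᶜ := by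
    rintro ω ⟨x, hxX, hx⟩
    obtain ⟨c, hct, hxc⟩ := Set.mem_iUnion₂.mp (hcover hxX)
    refine Set.mem_iUnion₂.mpr ⟨c, htfin.mem_toFinset.mpr hct, ?_⟩
    refine Set.mem_iInter₂.mpr fun j hj => ?_
    rw [Finset.mem_Icc] at hj
    intro hmem
    have h1 : dist (Y j ω) x ≤ dist (Y j ω) c + dist c x := dist_triangle _ _ _
    have h2 : dist (Y j ω) c < η / 2 := mem_ball.mp hmem
    have h3 : dist c x < η / 2 := by
      have := mem_ball.mp hxc; rwa [dist_comm]
    have h4 : η < dist (Y j ω) x := by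
      rw [dist_eq_norm]; exact hx j hj.1 hj.2
    linarith
  -- probability of each piece
  have hpiece : ∀ c ∈ s, P (⋂ j ∈ Finset.Icc 1 i, Y j ⁻¹' (ball c (η / 2))ᶜ)
      = (1 - p c) ^ i := by
    intro c hc
    have hA : MeasurableSet ((ball c (η / 2))ᶜ : Set (EuclideanSpace ℝ (Fin d))) :=
      measurableSet_ball.compl
    have hprod := hindep.measure_inter_preimage_eq_mul (Finset.Icc 1 i)
      (sets := fun _ => (ball c (η / 2))ᶜ) (fun j _ => hA)
    rw [hprod]
    have hone : ∀ j, P (Y j ⁻¹' (ball c (η / 2))ᶜ) = 1 - p c := by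
      intro j
      have hmap : Measure.map (Y j) P (ball c (η / 2))ᶜ = P (Y j ⁻¹' (ball c (η / 2))ᶜ) :=
        Measure.map_apply (hmeas j) hA
      rw [← hmap, hlaw j]
      have := measure_compl (μ := μ) measurableSet_ball
        ((hple c).trans_lt (by norm_num)).ne
      rw [this, hμuniv]
    calc ∏ j ∈ Finset.Icc 1 i, P (Y j ⁻¹' (ball c (η / 2))ᶜ)
        = ∏ _j ∈ Finset.Icc 1 i, (1 - p c) := Finset.prod_congr rfl fun j _ => hone j
      _ = (1 - p c) ^ (Finset.Icc 1 i).card := Finset.prod_const _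
      _ = (1 - p c) ^ i := by rw [Nat.card_Icc]; norm_num
  calc P {ω | ∃ x ∈ X, ∀ j : ℕ, 1 ≤ j → j ≤ i → η < ‖Y j ω - x‖}
      ≤ P (⋃ c ∈ s, ⋂ j ∈ Finset.Icc 1 i, Y j ⁻¹' (ball c (η / 2))ᶜ) :=
        measure_mono hsubset
    _ ≤ ∑ c ∈ s, P (⋂ j ∈ Finset.Icc 1 i, Y j ⁻¹' (ball c (η / 2))ᶜ) :=
        measure_biUnion_finset_le s _
    _ = ∑ c ∈ s, (1 - p c) ^ i := Finset.sum_congr rfl hpiece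
    _ ≤ ∑ _c ∈ s, (ENNReal.ofReal r) ^ i :=
        Finset.sum_le_sum fun c hc => pow_le_pow_left' (hsub_le c hc) i
    _ = s.card * ENNReal.ofReal (r ^ i) := by
        rw [Finset.sum_const, ENNReal.ofReal_pow hr0.le]; simp [nsmul_eq_mul]
    _ = ENNReal.ofReal ((s.card : ℝ) * r ^ i) := by
        rw [ENNReal.ofReal_mul (by positivity)]
        simp
    _ = ENNReal.ofReal ((s.card : ℝ) * Real.exp (-(-Real.log r) * i)) := by
        congr 1
        rw [neg_neg, mul_comm (Real.log r) (i : ℝ), Real.exp_nat_mul, Real.exp_log hr0]
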